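/- Let (V, r, par) be a finite rooted tree and ℓ, w : V → ℝ. Let O be the union of all covered service subtrees (with respect to w). Then O is itself a covered service subtree, and every covered service subtree is contained in O; in particular there is a unique inclusion-maximal covered service subtree. -/
import Mathlib


open scoped Classical

/-- `u` is a descendant of `v` (equivalently, `v` is an ancestor of `u`). -/
def IsDesc {V : Type*} (par : V → V) (u v : V) : Prop := ∃ n : ℕ, par^[n] u = v

/-- `Z` is a subtree rooted at `v`. -/
def IsSubtree {V : Type*} [DecidableEq V] (par : V → V) (v : V) (Z : Finset V) : Prop :=
  v ∈ Z ∧ (∀ u ∈ Z, IsDesc par u v) ∧ ∀ u ∈ Z, u ≠ v → par u ∈ Z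

/-- `Z` is a covered subtree rooted at `z` (with respect to the waiting costs `w`). -/
def Covered {V : Type*} [Fintype V] [DecidableEq V] (par : V → V) (ℓ w : V → ℝ)
    (z : V) (Z : Finset V) : Prop :=
  IsSubtree par z Z ∧ ∀ x ∈ Z, x ≠ z →
    ∑ u ∈ Z.filter (fun u => IsDesc par u x), ℓ u ≤
      ∑ u ∈ Z.filter (fun u => IsDesc par u x), w u

section Aux

variable {V : Type*} [Fintype V] [DecidableEq V]

lemma isDesc_trans (par : V → V) {u v x : V} (h1 : IsDesc par u v) (h2 : IsDesc par v x) :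
    IsDesc par u x := by
  obtain ⟨n, hn⟩ := h1; obtain ⟨m, hm⟩ := h2
  exact ⟨m + n, by rw [Function.iterate_add_apply, hn, hm]⟩

lemma anc_mem (par : V → V) {r : V} (hroot : par r = r) {Z : Finset V}
    (hZ : IsSubtree par r Z) {u : V} (hu : u ∈ Z) : ∀ n, par^[n] u ∈ Z := by
  intro n
  induction n with
  | zero => exact hu
  | succ n ih =>
    rw [Function.iterate_succ_apply']
    by_cases h : par^[n] u = r
    · rw [h, hroot]; exact hZ.1
    · exact hZ.2.2 _ ih h

lemma anc_mem' (par : V → V) {r : V} (hroot : par r = r) {Z : Finset V}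
    (hZ : IsSubtree par r Z) {u y : V} (hu : u ∈ Z) (h : IsDesc par u y) : y ∈ Z := by
  obtain ⟨n, hn⟩ := h; exact hn ▸ anc_mem par hroot hZ hu n

lemma desc_comparable (par : V → V) {u x y : V} (hx : IsDesc par u x) (hy : IsDesc par u y) :
    IsDesc par x y ∨ IsDesc par y x := by
  obtain ⟨j, hj⟩ := hx; obtain ⟨k, hk⟩ := hy
  rcases le_total j k with h | h
  · left
    exact ⟨k - j, by rw [← hj, ← Function.iterate_add_apply, Nat.sub_add_cancel h, hk]⟩
  · right
    exact ⟨j - k, by rw [← hk, ← Function.iterate_add_apply, Nat.sub_add_cancel h, hj]⟩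

lemma exists_top (par : V → V) {r : V} (hreach : ∀ v, ∃ n : ℕ, par^[n] v = r)
    {Z : Finset V} (hZ : r ∈ Z) {u : V} (hu : u ∉ Z) :
    ∃ y, IsDesc par u y ∧ y ∉ Z ∧ par y ∈ Z := by
  obtain ⟨N, hN⟩ := hreach u
  have hex : ∃ n, par^[n] u ∈ Z := ⟨N, hN ▸ hZ⟩
  have hms := Nat.find_spec hex
  have hm0 : Nat.find hex ≠ 0 := by
    intro h
    rw [h] at hms
    exact hu hms
  obtain ⟨k, hk⟩ : ∃ k, Nat.find hex = k + 1 := ⟨Nat.find hex - 1, by omega⟩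
  rw [hk] at hms
  rw [Function.iterate_succ_apply'] at hms
  exact ⟨par^[k] u, ⟨k, rfl⟩, Nat.find_min hex (by omega), hms⟩

lemma cov_iff (ℓ w : V → ℝ) (A : Finset V) :
    (∑ u ∈ A, ℓ u ≤ ∑ u ∈ A, w u) ↔ 0 ≤ ∑ u ∈ A, (w u - ℓ u) := by
  rw [Finset.sum_sub_distrib, sub_nonneg]

lemma covered_union_aux (par : V → V) {r : V} (hroot : par r = r)
    (hreach : ∀ v, ∃ n : ℕ, par^[n] v = r) (ℓ w : V → ℝ) :
    ∀ n (Z₁ Z₂ : Finset V), (Z₂ \ Z₁).card ≤ n →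
      Covered par ℓ w r Z₁ → Covered par ℓ w r Z₂ → Covered par ℓ w r (Z₁ ∪ Z₂) := by
  intro n
  induction n with
  | zero =>
    intro Z₁ Z₂ hc h1 _
    have hsub : Z₂ ⊆ Z₁ := by
      rw [Nat.le_zero, Finset.card_eq_zero, Finset.sdiff_eq_empty_iff_subset] at hc
      exact hc
    rwa [Finset.union_eq_left.mpr hsub]
  | succ n ih =>
    intro Z₁ Z₂ hc h1 h2
    by_cases hsub : Z₂ ⊆ Z₁
    · rwa [Finset.union_eq_left.mpr hsub]
    · obtain ⟨u, hu2, hu1⟩ : ∃ u, u ∈ Z₂ ∧ u ∉ Z₁ := by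
        obtain ⟨u, hu⟩ := Finset.not_subset.mp hsub
        exact ⟨u, hu.1, hu.2⟩
      obtain ⟨y, hyu, hy1, hpy⟩ := exists_top par hreach h1.1.1 hu1
      have hy2 : y ∈ Z₂ := anc_mem' par hroot h2.1 hu2 hyu
      have hyr : y ≠ r := fun h => hy1 (h ▸ h1.1.1)
      -- the subtree of Z₂ below y
      have hSZ1 : ∀ v ∈ Z₂.filter (fun v => IsDesc par v y), v ∉ Z₁ := by
        intro v hv hv1
        exact hy1 (anc_mem' par hroot h1.1 hv1 (Finset.mem_filter.mp hv).2)
      have hcov' : Covered par ℓ w r (Z₁ ∪ Z₂.filter (fun v => IsDesc par v y)) := by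
        constructor
        · refine ⟨Finset.mem_union_left _ h1.1.1, fun v _ => hreach v, ?_⟩
          intro v hv hvr
          rcases Finset.mem_union.mp hv with hv1 | hvS
          · exact Finset.mem_union_left _ (h1.1.2.2 v hv1 hvr)
          · obtain ⟨hv2, m, hm⟩ := Finset.mem_filter.mp hvS
            rcases Nat.eq_zero_or_pos m with h0 | hpos
            · have hvy : v = y := by simpa [h0] using hm
              exact Finset.mem_union_left _ (hvy ▸ hpy)
            · have hparv : par v ∈ Z₂ := h2.1.2.2 v hv2 hvr
              refine Finset.mem_union_right _ (Finset.mem_filter.mpr ⟨hparv, m - 1, ?_⟩)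
              rw [← Function.iterate_succ_apply, Nat.succ_eq_add_one,
                Nat.sub_add_cancel hpos]
              exact hm
        · intro x hx hxr
          rw [cov_iff]
          rcases Finset.mem_union.mp hx with hx1 | hxS
          · by_cases hyx : IsDesc par y x
            · have hfilS : (Z₂.filter (fun v => IsDesc par v y)).filter
                  (fun v => IsDesc par v x) = Z₂.filter (fun v => IsDesc par v y) :=
                Finset.filter_eq_self.mpr
                  (fun v hv => isDesc_trans par (Finset.mem_filter.mp hv).2 hyx)
              have hdisj : Disjoint (Z₁.filter (fun v => IsDesc par v x))
                  (Z₂.filter (fun v => IsDesc par v y)) :=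
                Finset.disjoint_left.mpr
                  (fun v hv hvS => hSZ1 v hvS (Finset.mem_filter.mp hv).1)
              rw [Finset.filter_union, hfilS, Finset.sum_union hdisj]
              exact add_nonneg ((cov_iff ℓ w _).mp (h1.2 x hx1 hxr))
                ((cov_iff ℓ w _).mp (h2.2 y hy2 hyr))
            · have hfilS : (Z₂.filter (fun v => IsDesc par v y)).filter
                  (fun v => IsDesc par v x) = ∅ := by
                rw [Finset.filter_eq_empty_iff]
                intro v hv hvx
                obtain ⟨_, hvy⟩ := Finset.mem_filter.mp hv
                rcases desc_comparable par hvx hvy with h | h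
                · exact hy1 (anc_mem' par hroot h1.1 hx1 h)
                · exact hyx h
              rw [Finset.filter_union, hfilS, Finset.union_empty]
              exact (cov_iff ℓ w _).mp (h1.2 x hx1 hxr)
          · obtain ⟨hx2, hxy⟩ := Finset.mem_filter.mp hxS
            have hx1 : x ∉ Z₁ := hSZ1 x hxS
            have hfil1 : Z₁.filter (fun v => IsDesc par v x) = ∅ := by
              rw [Finset.filter_eq_empty_iff]
              intro v hv hvx
              exact hx1 (anc_mem' par hroot h1.1 hv hvx)
            have hfilS : (Z₂.filter (fun v => IsDesc par v y)).filter
                (fun v => IsDesc par v x) = Z₂.filter (fun v => IsDesc par v x) := by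
              rw [Finset.filter_filter]
              exact Finset.filter_congr
                (fun v _ => ⟨fun h => h.2, fun h => ⟨isDesc_trans par h hxy, h⟩⟩)
            rw [Finset.filter_union, hfil1, hfilS, Finset.empty_union]
            exact (cov_iff ℓ w _).mp (h2.2 x hx2 (fun h => hx1 (h ▸ h1.1.1)))
      have hcard : (Z₂ \ (Z₁ ∪ Z₂.filter (fun v => IsDesc par v y))).card ≤ n := by
        have hss : Z₂ \ (Z₁ ∪ Z₂.filter (fun v => IsDesc par v y)) ⊂ Z₂ \ Z₁ := by
          constructor
          · intro v hv
            rw [Finset.mem_sdiff] at hv ⊢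
            exact ⟨hv.1, fun h => hv.2 (Finset.mem_union_left _ h)⟩
          · intro hcon
            have hy : y ∈ Z₂ \ Z₁ := Finset.mem_sdiff.mpr ⟨hy2, hy1⟩
            have := hcon hy
            rw [Finset.mem_sdiff] at this
            exact this.2 (Finset.mem_union_right _
              (Finset.mem_filter.mpr ⟨hy2, ⟨0, rfl⟩⟩))
        have := Finset.card_lt_card hss
        omega
      have hres := ih _ Z₂ hcard hcov' h2
      have hU : Z₁ ∪ Z₂.filter (fun v => IsDesc par v y) ∪ Z₂ = Z₁ ∪ Z₂ := by
        rw [Finset.union_assoc, Finset.union_eq_right.mpr (Finset.filter_subset _ _)]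
      rwa [hU] at hres

lemma covered_union (par : V → V) {r : V} (hroot : par r = r)
    (hreach : ∀ v, ∃ n : ℕ, par^[n] v = r) (ℓ w : V → ℝ) {Z₁ Z₂ : Finset V}
    (h1 : Covered par ℓ w r Z₁) (h2 : Covered par ℓ w r Z₂) :
    Covered par ℓ w r (Z₁ ∪ Z₂) :=
  covered_union_aux par hroot hreach ℓ w (Z₂ \ Z₁).card Z₁ Z₂ le_rfl h1 h2

lemma covered_root (par : V → V) (r : V) (ℓ w : V → ℝ) :
    Covered par ℓ w r ({r} : Finset V) := by
  refine ⟨⟨Finset.mem_singleton_self r, ?_, ?_⟩, ?_⟩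
  · intro u hu
    exact ⟨0, Finset.mem_singleton.mp hu⟩
  · intro u hu hur
    exact absurd (Finset.mem_singleton.mp hu) hur
  · intro x hx hxr
    exact absurd (Finset.mem_singleton.mp hx) hxr

lemma covered_sup (par : V → V) {r : V} (hroot : par r = r)
    (hreach : ∀ v, ∃ n : ℕ, par^[n] v = r) (ℓ w : V → ℝ) (𝒮 : Finset (Finset V))
    (h : ∀ Z ∈ 𝒮, Covered par ℓ w r Z) :
    Covered par ℓ w r ({r} ∪ 𝒮.sup id) := by
  induction 𝒮 using Finset.induction_on with
  | empty => simpa using covered_root par r ℓ w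
  | @insert a s ha ih =>
    rw [Finset.sup_insert]
    have heq : ({r} : Finset V) ∪ (id a ⊔ s.sup id) = ({r} ∪ s.sup id) ∪ a := by
      simp only [id_eq]
      rw [Finset.sup_eq_union, Finset.union_left_comm, Finset.union_comm a]
    rw [heq]
    exact covered_union par hroot hreach ℓ w
      (ih (fun Z hZ => h Z (Finset.mem_insert_of_mem hZ)))
      (h a (Finset.mem_insert_self a s))

end Aux

/-- The union `O` of all covered service subtrees is itself a covered service subtree,
contains every covered service subtree, and consequently is the unique
inclusion-maximal covered service subtree. -/
theorem stmt6 {V : Type*} [Fintype V] [DecidableEq V]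
    (r : V) (par : V → V) (hroot : par r = r) (hreach : ∀ v, ∃ n : ℕ, par^[n] v = r)
    (ℓ w : V → ℝ) :
    let O : Finset V := Finset.univ.filter (fun u => ∃ Z, Covered par ℓ w r Z ∧ u ∈ Z)
    Covered par ℓ w r O ∧ (∀ Z, Covered par ℓ w r Z → Z ⊆ O) ∧
      ∃! M : Finset V, Covered par ℓ w r M ∧ ∀ Z, Covered par ℓ w r Z → Z ⊆ M := by
  intro O
  have hOeq : O = {r} ∪ ((Finset.univ : Finset (Finset V)).filter
      (fun Z => Covered par ℓ w r Z)).sup id := by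
    ext u
    simp only [O, Finset.mem_filter, Finset.mem_univ, true_and, Finset.mem_union,
      Finset.mem_singleton, Finset.mem_sup, id]
    constructor
    · rintro ⟨Z, hZ, hu⟩
      exact Or.inr ⟨Z, hZ, hu⟩
    · rintro (hur | ⟨Z, hZ, hu⟩)
      · exact ⟨({r} : Finset V), covered_root par r ℓ w, Finset.mem_singleton.mpr hur⟩
      · exact ⟨Z, hZ, hu⟩
  have hO : Covered par ℓ w r O := by
    rw [hOeq]
    exact covered_sup par hroot hreach ℓ w _ (fun Z hZ => (Finset.mem_filter.mp hZ).2)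
  have hsub : ∀ Z, Covered par ℓ w r Z → Z ⊆ O := fun Z hZ u hu =>
    Finset.mem_filter.mpr ⟨Finset.mem_univ u, Z, hZ, hu⟩
  refine ⟨hO, hsub, O, ⟨hO, hsub⟩, ?_⟩
  rintro M ⟨hM, hMub⟩
  exact Finset.Subset.antisymm (hsub M hM) (hMub O hO)
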